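/- Let F_q be a finite field, n a positive integer, and C_a, C_b, C_z nonzero F_q-linear subspaces of F_q^n with C_z ⊆ C_b ⊆ C_a, having minimum distances d_a, d_b, d_z respectively. Let α ∈ F_q with α ≠ 0 and α ≠ 1, let C = {(a | a+b | a+αb+z) : a ∈ C_a, b ∈ C_b, z ∈ C_z}, and set d_0 = min{3d_a, 2d_b, d_z}. Then for every r ∈ F_q^{3n} there is at most one codeword c ∈ C with Hamming distance d_H(r, c) ≤ ⌊(d_0 − 1)/2⌋; i.e., every error pattern of weight at most ⌊(d_0 − 1)/2⌋ is uniquely decodable. -/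

import Mathlib

/-- Concatenation `(u | v | w)` of three vectors of length `n` into a vector of length `3n`. -/
def cat3 {F : Type*} {n : ℕ} (u v w : Fin n → F) : Fin (n + n + n) → F :=
  Fin.append (Fin.append u v) w

/-- `d` is the minimum distance of the (nonzero) linear code `C`: it is the least element of
the set of Hamming weights of nonzero codewords of `C`. -/
def IsMinDist {F : Type*} [Field F] [DecidableEq F] {m : ℕ}
    (C : Submodule F (Fin m → F)) (d : ℕ) : Prop :=
  IsLeast {w : ℕ | ∃ c ∈ C, c ≠ 0 ∧ hammingNorm c = w} d

/-- The code `C = {(a | a+b | a+αb+z) : a ∈ C_a, b ∈ C_b, z ∈ C_z}` as a set of words. -/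
def codeSet {F : Type*} [Field F] {n : ℕ} (α : F)
    (Ca Cb Cz : Submodule F (Fin n → F)) : Set (Fin (n + n + n) → F) :=
  {c | ∃ a ∈ Ca, ∃ b ∈ Cb, ∃ z ∈ Cz, c = cat3 a (a + b) (a + α • b + z)}

lemma hn_append {F : Type*} [Zero F] [DecidableEq F] {m k : ℕ} (u : Fin m → F) (v : Fin k → F) :
    hammingNorm (Fin.append u v) = hammingNorm u + hammingNorm v := by
  simp_rw [hammingNorm, Finset.card_filter]
  rw [Fin.sum_univ_add]
  simp [Fin.append_left, Fin.append_right]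

lemma hn_cat3 {F : Type*} [Zero F] [DecidableEq F] {n : ℕ} (u v w : Fin n → F) :
    hammingNorm (cat3 u v w) = hammingNorm u + hammingNorm v + hammingNorm w := by
  rw [cat3, hn_append, hn_append]

lemma append_sub {F : Type*} [AddGroup F] {m k : ℕ} (u u' : Fin m → F) (v v' : Fin k → F) :
    Fin.append u v - Fin.append u' v' = Fin.append (u - u') (v - v') := by
  funext i
  refine Fin.addCases (fun j => ?_) (fun j => ?_) i <;>
    simp only [Pi.sub_apply, Fin.append_left, Fin.append_right]

lemma cat3_sub {F : Type*} [AddGroup F] {n : ℕ} (u v w u' v' w' : Fin n → F) :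
    cat3 u v w - cat3 u' v' w' = cat3 (u - u') (v - v') (w - w') := by
  simp [cat3, append_sub]

lemma cat3_zero {F : Type*} [AddGroup F] {n : ℕ} :
    cat3 (0 : Fin n → F) 0 0 = 0 := by
  funext i
  refine Fin.addCases (fun j => ?_) (fun j => ?_) i
  · refine Fin.addCases (fun l => ?_) (fun l => ?_) j <;>
      simp only [cat3, Fin.append_left, Fin.append_right, Pi.zero_apply]
  · simp only [cat3, Fin.append_right, Pi.zero_apply]

lemma scalar_z {F : Type*} [Field F] [DecidableEq F] {α x β ζ : F} (hζ : ζ ≠ 0) :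
    1 ≤ (if x ≠ 0 then 1 else 0) + (if x + β ≠ 0 then 1 else 0)
      + (if x + α * β + ζ ≠ 0 then 1 else 0) := by
  rcases eq_or_ne x 0 with h1 | h1
  · rcases eq_or_ne (x + β) 0 with h2 | h2
    · have h3 : x + α * β + ζ ≠ 0 := by
        intro h; exact hζ (by linear_combination h - (1 - α) * h1 - α * h2)
      have e : (if x + α * β + ζ ≠ 0 then (1 : ℕ) else 0) = 1 := if_pos h3
      omega
    · have e : (if x + β ≠ 0 then (1 : ℕ) else 0) = 1 := if_pos h2
      omega
  · have e : (if x ≠ 0 then (1 : ℕ) else 0) = 1 := if_pos h1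
    omega

lemma scalar_b {F : Type*} [Field F] [DecidableEq F] {α x β : F}
    (hα0 : α ≠ 0) (hα1 : α ≠ 1) (hβ : β ≠ 0) :
    2 ≤ (if x ≠ 0 then 1 else 0) + (if x + β ≠ 0 then 1 else 0)
      + (if x + α * β ≠ 0 then 1 else 0) := by
  rcases eq_or_ne x 0 with h1 | h1
  · have h2 : x + β ≠ 0 := by rw [h1, zero_add]; exact hβ
    have h3 : x + α * β ≠ 0 := by rw [h1, zero_add]; exact mul_ne_zero hα0 hβ
    have e2 : (if x + β ≠ 0 then (1 : ℕ) else 0) = 1 := if_pos h2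
    have e3 : (if x + α * β ≠ 0 then (1 : ℕ) else 0) = 1 := if_pos h3
    omega
  · have e1 : (if x ≠ 0 then (1 : ℕ) else 0) = 1 := if_pos h1
    rcases eq_or_ne (x + β) 0 with h2 | h2
    · have h3 : x + α * β ≠ 0 := by
        intro h
        have h' : (α - 1) * β = 0 := by linear_combination h - h2
        rcases mul_eq_zero.1 h' with h'' | h''
        · exact hα1 (by linear_combination h'')
        · exact hβ h''
      have e3 : (if x + α * β ≠ 0 then (1 : ℕ) else 0) = 1 := if_pos h3
      omega
    · have e2 : (if x + β ≠ 0 then (1 : ℕ) else 0) = 1 := if_pos h2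
      omega

/-- Let `C_z ⊆ C_b ⊆ C_a ⊆ F^n` be nonzero subspaces with minimum
distances `d_z, d_b, d_a`, let `α ≠ 0, 1`, `C = {(a | a+b | a+αb+z)}` and
`d₀ = min {3d_a, 2d_b, d_z}`. Then for every `r ∈ F^{3n}` there is at most one `c ∈ C` with
`d_H(r, c) ≤ ⌊(d₀ − 1)/2⌋`: every error of weight `≤ ⌊(d₀ − 1)/2⌋` is uniquely decodable. -/
theorem stmt_12 (F : Type*) [Field F] [Fintype F] [DecidableEq F] (n : ℕ) (hn : 0 < n)
    (Ca Cb Cz : Submodule F (Fin n → F))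
    (hCa : Ca ≠ ⊥) (hCb : Cb ≠ ⊥) (hCz : Cz ≠ ⊥)
    (hzb : Cz ≤ Cb) (hba : Cb ≤ Ca)
    (da db dz : ℕ) (hda : IsMinDist Ca da) (hdb : IsMinDist Cb db) (hdz : IsMinDist Cz dz)
    (α : F) (hα0 : α ≠ 0) (hα1 : α ≠ 1)
    (d0 : ℕ) (hd0 : d0 = min (3 * da) (min (2 * db) dz)) :
    ∀ r : Fin (n + n + n) → F, ∀ c ∈ codeSet α Ca Cb Cz, ∀ c' ∈ codeSet α Ca Cb Cz,
      hammingDist r c ≤ (d0 - 1) / 2 → hammingDist r c' ≤ (d0 - 1) / 2 → c = c' := by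
  have hda1 : 1 ≤ da := by
    obtain ⟨⟨c, _, hc, hcw⟩, _⟩ := hda
    rw [← hcw]; exact Nat.one_le_iff_ne_zero.2 (hammingNorm_ne_zero_iff.2 hc)
  have hdb1 : 1 ≤ db := by
    obtain ⟨⟨c, _, hc, hcw⟩, _⟩ := hdb
    rw [← hcw]; exact Nat.one_le_iff_ne_zero.2 (hammingNorm_ne_zero_iff.2 hc)
  have hdz1 : 1 ≤ dz := by
    obtain ⟨⟨c, _, hc, hcw⟩, _⟩ := hdz
    rw [← hcw]; exact Nat.one_le_iff_ne_zero.2 (hammingNorm_ne_zero_iff.2 hc)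
  have hd01 : 1 ≤ d0 := by omega
  -- key: every nonzero codeword has weight at least d0
  have key : ∀ c ∈ codeSet α Ca Cb Cz, c ≠ 0 → d0 ≤ hammingNorm c := by
    rintro c ⟨a, ha, b, hb, z, hz, rfl⟩ hcne
    rw [hn_cat3]
    by_cases hzz : z = 0
    · subst hzz
      by_cases hbb : b = 0
      · subst hbb
        have haa : a ≠ 0 := by
          rintro rfl; exact hcne (by simpa using cat3_zero)
        have h3 : 3 * da ≤ 3 * hammingNorm a :=
          Nat.mul_le_mul_left 3 (hda.2 ⟨a, ha, haa, rfl⟩)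
        simp only [add_zero, smul_zero]
        omega
      · have hwb : db ≤ hammingNorm b := hdb.2 ⟨b, hb, hbb, rfl⟩
        have h2 : 2 * hammingNorm b ≤
            hammingNorm a + hammingNorm (a + b) + hammingNorm (a + α • b + 0) := by
          simp_rw [hammingNorm, Finset.card_filter]
          rw [Finset.mul_sum, ← Finset.sum_add_distrib, ← Finset.sum_add_distrib]
          refine Finset.sum_le_sum fun i _ => ?_
          by_cases hbi : b i = 0
          · simp [hbi]
          · rw [if_pos hbi]
            simp only [Pi.add_apply, Pi.smul_apply, Pi.zero_apply, smul_eq_mul, add_zero,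
              mul_one]
            exact scalar_b hα0 hα1 hbi
        omega
    · have hwz : dz ≤ hammingNorm z := hdz.2 ⟨z, hz, hzz, rfl⟩
      have h1 : hammingNorm z ≤
          hammingNorm a + hammingNorm (a + b) + hammingNorm (a + α • b + z) := by
        simp_rw [hammingNorm, Finset.card_filter]
        rw [← Finset.sum_add_distrib, ← Finset.sum_add_distrib]
        refine Finset.sum_le_sum fun i _ => ?_
        by_cases hzi : z i = 0
        · simp [hzi]
        · rw [if_pos hzi]
          simp only [Pi.add_apply, Pi.smul_apply, smul_eq_mul]
          exact scalar_z hzi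
      omega
  -- uniqueness via the triangle inequality
  rintro r c hc c' hc' h1 h2
  by_contra hne
  obtain ⟨a, ha, b, hb, z, hz, rfl⟩ := hc
  obtain ⟨a', ha', b', hb', z', hz', rfl⟩ := hc'
  set c := cat3 a (a + b) (a + α • b + z) with hcdef
  set c' := cat3 a' (a' + b') (a' + α • b' + z') with hcdef'
  have hmem : c - c' ∈ codeSet α Ca Cb Cz := by
    refine ⟨a - a', sub_mem ha ha', b - b', sub_mem hb hb', z - z', sub_mem hz hz', ?_⟩
    rw [hcdef, hcdef', cat3_sub]
    have e1 : a + b - (a' + b') = a - a' + (b - b') := by abel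
    have e2 : a + α • b + z - (a' + α • b' + z') = a - a' + α • (b - b') + (z - z') := by
      rw [smul_sub]; abel
    rw [e1, e2]
  have hsubne : c - c' ≠ 0 := sub_ne_zero.2 hne
  have hge := key _ hmem hsubne
  have hdist : hammingDist c c' = hammingNorm (c - c') := by
    rw [hammingDist_comm, hammingDist_eq_hammingNorm, neg_add_eq_sub]
  have htri : hammingDist c c' ≤ hammingDist r c + hammingDist r c' :=
    hammingDist_triangle_left c c' r
  omega
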